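/- Let σ be an orientation with maximum indegree at most 3 of a graph containing vertices b, c and seven vertices a₁,…,a₇ each adjacent exactly to b and c (within this subgraph). Then some aₖ has indegree 2 within this subgraph; consequently, in any proper 3-orientation of a graph containing this configuration, neither b nor c can have indegree 2. -/
import Mathlib


/-- An orientation of a simple graph: a relation choosing exactly one
direction for each edge, and nothing else. -/
def IsOrientation {V : Type*} (G : SimpleGraph V) (o : V → V → Prop) : Prop :=
  (∀ u v, G.Adj u v ↔ (o u v ∨ o v u)) ∧ (∀ u v, o u v → ¬ o v u)

/-- Indegree of a vertex in an orientation. -/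
noncomputable def inDeg {V : Type*} (o : V → V → Prop) (v : V) : ℕ :=
  {u | o u v}.ncard

/-- A proper orientation: adjacent vertices get distinct indegrees. -/
def IsProper {V : Type*} (G : SimpleGraph V) (o : V → V → Prop) : Prop :=
  ∀ u v, G.Adj u v → inDeg o u ≠ inDeg o v


/-- If a graph contains vertices `b ≠ c` and seven vertices `a k` whose
neighborhoods are exactly `{b, c}`, then any orientation with maximum indegree
at most `3` gives some `a k` indegree `2`; consequently, if the orientation is
proper, neither `b` nor `c` has indegree `2`. -/
theorem k27_gadget {V : Type*} [Fintype V] (G : SimpleGraph V)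
    (b c : V) (hbc : b ≠ c) (a : Fin 7 → V) (ha : Function.Injective a)
    (hnbr : ∀ k, G.neighborSet (a k) = {b, c})
    (o : V → V → Prop) (ho : IsOrientation G o) (hind : ∀ v, inDeg o v ≤ 3) :
    (∃ k, inDeg o (a k) = 2) ∧
    (IsProper G o → inDeg o b ≠ 2 ∧ inDeg o c ≠ 2) := by
  obtain ⟨hadj, hasym⟩ := ho
  have hab : ∀ k, G.Adj (a k) b := by
    intro k
    have : b ∈ G.neighborSet (a k) := by rw [hnbr]; left; rfl
    exact this
  have hac : ∀ k, G.Adj (a k) c := by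
    intro k
    have : c ∈ G.neighborSet (a k) := by rw [hnbr]; right; rfl
    exact this
  have main : ∃ k, inDeg o (a k) = 2 := by
    by_contra h
    push_neg at h
    have hk : ∀ k, o (a k) b ∨ o (a k) c := by
      intro k
      by_contra hcon
      push_neg at hcon
      have hb : o b (a k) :=
        (((hadj b (a k)).mp (hab k).symm).resolve_right hcon.1)
      have hc : o c (a k) :=
        (((hadj c (a k)).mp (hac k).symm).resolve_right hcon.2)
      apply h k
      have hset : {u | o u (a k)} = {b, c} := by
        apply Set.Subset.antisymm
        · intro u hu
          have hadju : G.Adj (a k) u := ((hadj u (a k)).mpr (Or.inl hu)).symm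
          have : u ∈ G.neighborSet (a k) := hadju
          rwa [hnbr] at this
        · intro u hu
          rcases hu with rfl | rfl
          · exact hb
          · exact hc
      rw [inDeg, hset, Set.ncard_pair hbc]
    have hrange : Set.range a ⊆ {u | o u b} ∪ {u | o u c} := by
      rintro _ ⟨k, rfl⟩
      exact (hk k).elim Or.inl Or.inr
    have h7 : (Set.range a).ncard = 7 := by
      rw [← Set.image_univ, Set.ncard_image_of_injective _ ha, Set.ncard_univ]
      simp
    have hle : (Set.range a).ncard ≤ ({u | o u b} ∪ {u | o u c}).ncard :=
      Set.ncard_le_ncard hrange (Set.toFinite _)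
    have hbc3 : ({u | o u b} ∪ {u | o u c}).ncard ≤
        {u | o u b}.ncard + {u | o u c}.ncard := Set.ncard_union_le _ _
    have h1 := hind b
    have h2 := hind c
    simp only [inDeg] at h1 h2
    omega
  refine ⟨main, fun hp => ?_⟩
  obtain ⟨k, hk2⟩ := main
  constructor
  · intro hb2
    exact hp (a k) b (hab k) (hk2.trans hb2.symm)
  · intro hc2
    exact hp (a k) c (hac k) (hk2.trans hc2.symm)
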